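/- arXiv:2109.06962 — 5 statements merged into one kernel-verified Lean document; each statement's English description precedes it below -/
import Mathlib

section
/- Let K ⊆ ℝ³ be a body of constant width one. Then r(K) + R(K) = 1, and there exists a point a ∈ ℝ³ such that closedBall(a, r(K)) ⊆ K ⊆ closedBall(a, R(K)); that is, K has an inball which is concentric with its circumball. -/
open MeasureTheory Metric Filter
open scoped RealInnerProductSpace

noncomputable section

/-- The support function of a set `K ⊆ ℝ³`. -/
def suppFn (K : Set (EuclideanSpace ℝ (Fin 3))) (u : EuclideanSpace ℝ (Fin 3)) : ℝ :=
  sSup ((fun x => ⟪x, u⟫) '' K)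

/-- A body of constant width one in `ℝ³`: a nonempty compact convex set whose support
function satisfies `H(u) + H(-u) = ‖u‖` for all `u`. -/
def IsBodyOfConstantWidthOne (K : Set (EuclideanSpace ℝ (Fin 3))) : Prop :=
  K.Nonempty ∧ IsCompact K ∧ Convex ℝ K ∧
    ∀ u : EuclideanSpace ℝ (Fin 3), suppFn K u + suppFn K (-u) = ‖u‖

/-- The inradius of `K ⊆ ℝ³`. -/
def inradius (K : Set (EuclideanSpace ℝ (Fin 3))) : ℝ :=
  sSup {r : ℝ | 0 ≤ r ∧ ∃ a : EuclideanSpace ℝ (Fin 3), closedBall a r ⊆ K}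

/-- The circumradius of `K ⊆ ℝ³`. -/
def circumradius (K : Set (EuclideanSpace ℝ (Fin 3))) : ℝ :=
  sInf {r : ℝ | 0 ≤ r ∧ ∃ a : EuclideanSpace ℝ (Fin 3), K ⊆ closedBall a r}

lemma le_suppFn {K : Set (EuclideanSpace ℝ (Fin 3))} (hc : IsCompact K)
    {x u : EuclideanSpace ℝ (Fin 3)} (hx : x ∈ K) : ⟪x, u⟫ ≤ suppFn K u :=
  le_csSup ((hc.image (continuous_id.inner continuous_const)).bddAbove) ⟨x, hx, rfl⟩

lemma suppFn_le {K : Set (EuclideanSpace ℝ (Fin 3))} (hne : K.Nonempty)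
    {u : EuclideanSpace ℝ (Fin 3)} {c : ℝ} (h : ∀ x ∈ K, ⟪x, u⟫ ≤ c) : suppFn K u ≤ c :=
  csSup_le (hne.image _) (by rintro _ ⟨x, hx, rfl⟩; exact h x hx)

lemma lemmaA {K : Set (EuclideanSpace ℝ (Fin 3))} (hK : IsBodyOfConstantWidthOne K)
    {a : EuclideanSpace ℝ (Fin 3)} {s : ℝ} (hsub : K ⊆ closedBall a s) :
    closedBall a (1 - s) ⊆ K := by
  obtain ⟨hne, hcomp, hconv, hw⟩ := hK
  intro z hz
  by_contra hzK
  obtain ⟨f, c, hfc, hcz⟩ := geometric_hahn_banach_closed_point hconv hcomp.isClosed hzK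
  set u := (InnerProductSpace.toDual ℝ (EuclideanSpace ℝ (Fin 3))).symm f with hu
  have hfu : ∀ y, ⟪y, u⟫ = f y := fun y => by
    rw [real_inner_comm]; exact InnerProductSpace.toDual_symm_apply
  have h1 : suppFn K u ≤ c := suppFn_le hne fun x hx => by rw [hfu]; exact (hfc x hx).le
  have h2 : suppFn K (-u) ≤ -⟪a, u⟫ + s * ‖u‖ := by
    refine suppFn_le hne fun x hx => ?_
    have hxa : ‖x - a‖ ≤ s := mem_closedBall_iff_norm.mp (hsub hx)
    have hcs : ⟪x - a, -u⟫ ≤ ‖x - a‖ * ‖u‖ := by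
      simpa [norm_neg] using real_inner_le_norm (x - a) (-u)
    have h3 : ‖x - a‖ * ‖u‖ ≤ s * ‖u‖ := mul_le_mul_of_nonneg_right hxa (norm_nonneg u)
    have h4 : ⟪x, -u⟫ = ⟪a, -u⟫ + ⟪x - a, -u⟫ := by rw [inner_sub_left]; ring
    rw [h4, inner_neg_right]
    linarith
  have hwu := hw u
  have h5 : ⟪z, u⟫ = ⟪a, u⟫ + ⟪z - a, u⟫ := by rw [inner_sub_left]; ring
  have hza : ‖z - a‖ ≤ 1 - s := mem_closedBall_iff_norm.mp hz
  have hcs2 : ⟪z - a, u⟫ ≤ ‖z - a‖ * ‖u‖ := real_inner_le_norm _ _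
  have h6 : ‖z - a‖ * ‖u‖ ≤ (1 - s) * ‖u‖ := mul_le_mul_of_nonneg_right hza (norm_nonneg u)
  have h7 : c < ⟪z, u⟫ := by rw [hfu]; exact hcz
  nlinarith

lemma lemmaB {K : Set (EuclideanSpace ℝ (Fin 3))} (hK : IsBodyOfConstantWidthOne K)
    {b : EuclideanSpace ℝ (Fin 3)} {r : ℝ} (hr : 0 ≤ r) (hball : closedBall b r ⊆ K) :
    K ⊆ closedBall b (1 - r) := by
  obtain ⟨hne, hcomp, hconv, hw⟩ := hK
  intro x hx
  have key : ∀ u : EuclideanSpace ℝ (Fin 3), ‖u‖ = 1 → ⟪x - b, u⟫ ≤ 1 - r := by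
    intro u hu
    have h1 : ⟪x, u⟫ ≤ suppFn K u := le_suppFn hcomp hx
    have hbm : b - r • u ∈ K := by
      apply hball
      simp [mem_closedBall_iff_norm, norm_smul, hu, abs_of_nonneg hr]
    have h2 : ⟪b - r • u, -u⟫ ≤ suppFn K (-u) := le_suppFn hcomp hbm
    have huu : ⟪u, u⟫ = 1 := by
      rw [real_inner_self_eq_norm_mul_norm, hu]; ring
    have h3 : ⟪b - r • u, -u⟫ = -⟪b, u⟫ + r := by
      rw [inner_neg_right, inner_sub_left, real_inner_smul_left, huu]; ring
    have hwu := hw u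
    rw [hu] at hwu
    rw [inner_sub_left]
    linarith [h3 ▸ h2]
  rcases eq_or_ne x b with h | h
  · have h0 := key (EuclideanSpace.single 0 1) (by simp)
    rw [h] at h0
    simp only [sub_self, inner_zero_left] at h0
    simpa [mem_closedBall, h] using h0
  · have hxb : x - b ≠ 0 := sub_ne_zero.mpr h
    set u := ‖x - b‖⁻¹ • (x - b) with hudef
    have hu : ‖u‖ = 1 := norm_smul_inv_norm hxb
    have hval : ⟪x - b, u⟫ = ‖x - b‖ := by
      rw [hudef, real_inner_smul_right, real_inner_self_eq_norm_mul_norm]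
      field_simp
    have := key u hu
    rw [hval] at this
    exact mem_closedBall_iff_norm.mpr this

theorem inradius_add_circumradius_eq_one_and_concentric
    (K : Set (EuclideanSpace ℝ (Fin 3))) (hK : IsBodyOfConstantWidthOne K) :
    inradius K + circumradius K = 1 ∧
    ∃ a : EuclideanSpace ℝ (Fin 3),
      closedBall a (inradius K) ⊆ K ∧ K ⊆ closedBall a (circumradius K) := by
  obtain ⟨x₀, hx₀⟩ := hK.1
  set S := {r : ℝ | 0 ≤ r ∧ ∃ a : EuclideanSpace ℝ (Fin 3), K ⊆ closedBall a r} with hS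
  set R := circumradius K with hR
  -- 1 ∈ S
  have hone : (1 : ℝ) ∈ S := by
    refine ⟨zero_le_one, x₀, ?_⟩
    have h0 : closedBall x₀ 0 ⊆ K := by simp [hx₀]
    simpa using lemmaB hK le_rfl h0
  have hSne : S.Nonempty := ⟨1, hone⟩
  have hSbd : BddBelow S := ⟨0, fun r hr => hr.1⟩
  have hR0 : 0 ≤ R := le_csInf hSne fun r hr => hr.1
  have hR1 : R ≤ 1 := csInf_le hSbd hone
  -- circumcenter exists
  have hcen : ∃ a, K ⊆ closedBall a R := by
    set t : ℕ → Set (EuclideanSpace ℝ (Fin 3)) := fun n =>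
      closedBall x₀ 2 ∩ ⋂ x ∈ K, closedBall x (R + 1 / (n + 1)) with ht
    have htcl : ∀ n, IsClosed (t n) :=
      fun n => isClosed_closedBall.inter (isClosed_biInter fun x _ => isClosed_closedBall)
    have htne : ∀ n, (t n).Nonempty := by
      intro n
      have hpos : (0 : ℝ) < 1 / (n + 1) := by positivity
      obtain ⟨r, hrS, hrlt⟩ := exists_lt_of_csInf_lt hSne (show R < R + 1/(n+1) by linarith)
      obtain ⟨hr0, a, ha⟩ := hrS
      have h11 : (1:ℝ)/(n+1) ≤ 1 := by
        rw [div_le_one (by positivity)]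
        linarith [Nat.cast_nonneg (α := ℝ) n]
      refine ⟨a, ?_, ?_⟩
      · have := ha hx₀
        rw [mem_closedBall] at this ⊢
        rw [dist_comm]
        linarith
      · refine Set.mem_iInter₂.mpr fun x hx => ?_
        have := ha hx
        rw [mem_closedBall] at this ⊢
        rw [dist_comm]
        linarith
    have htmono : ∀ n, t (n + 1) ⊆ t n := by
      intro n
      refine Set.inter_subset_inter le_rfl (Set.iInter₂_mono fun x _ => closedBall_subset_closedBall ?_)
      have : (1 : ℝ) / (n + 1 + 1) ≤ 1 / (n + 1) := by
        apply one_div_le_one_div_of_le <;> push_cast <;> linarith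
      push_cast
      linarith
    have ht0 : IsCompact (t 0) :=
      (isCompact_closedBall x₀ 2).inter_right (isClosed_biInter fun x _ => isClosed_closedBall)
    obtain ⟨a, ha⟩ := IsCompact.nonempty_iInter_of_sequence_nonempty_isCompact_isClosed
      t htmono htne ht0 htcl
    refine ⟨a, fun x hx => ?_⟩
    rw [mem_closedBall]
    refine le_of_forall_pos_le_add fun ε hε => ?_
    obtain ⟨n, hn⟩ := exists_nat_one_div_lt hε
    have : a ∈ t n := Set.mem_iInter.mp ha n
    have := Set.mem_iInter₂.mp this.2 x hx
    rw [mem_closedBall] at this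
    rw [dist_comm]
    push_cast at this hn ⊢
    linarith
  obtain ⟨a, hsub⟩ := hcen
  have hin : closedBall a (1 - R) ⊆ K := lemmaA hK hsub
  -- inradius
  set I := {r : ℝ | 0 ≤ r ∧ ∃ b : EuclideanSpace ℝ (Fin 3), closedBall b r ⊆ K} with hI
  have hmem : 1 - R ∈ I := ⟨by linarith, a, hin⟩
  have hub : ∀ r ∈ I, r ≤ 1 - R := by
    rintro r ⟨hr0, b, hb⟩
    have hKb : K ⊆ closedBall b (1 - r) := lemmaB hK hr0 hb
    have h1r : 0 ≤ 1 - r := by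
      have := hKb hx₀
      rw [mem_closedBall] at this
      exact le_trans dist_nonneg this
    have : R ≤ 1 - r := csInf_le hSbd ⟨h1r, b, hKb⟩
    linarith
  have hIr : inradius K = 1 - R :=
    le_antisymm (csSup_le ⟨_, hmem⟩ hub) (le_csSup ⟨1 - R, hub⟩ hmem)
  refine ⟨by rw [hIr]; ring, a, ?_, hsub⟩
  rw [hIr]; exact hin
end
end

section
/- Let K ⊆ ℝ³ be a body of constant width one whose support function H_K is differentiable at every point of ℝ³ \ {0}. Then for every r > 0 and all u, v ∈ ℝ³ with ‖u‖ ≥ r and ‖v‖ ≥ r, the gradient of H_K satisfies ‖∇H_K(u) − ∇H_K(v)‖ ≤ (1/r)·(1 + π/2)·‖u − v‖. -/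
open MeasureTheory Metric Filter
open scoped RealInnerProductSpace

set_option maxHeartbeats 1000000
noncomputable section

namespace GradSuppFnAux

local notation "E" => EuclideanSpace ℝ (Fin 3)

variable {K : Set (EuclideanSpace ℝ (Fin 3))}

lemma cont_inner (u : E) : Continuous fun x : E => ⟪x, u⟫ :=
  continuous_id.inner continuous_const

/-- Every maximizer of `⟪·, u⟫` on `K` realizes the support function value. -/
lemma suppFn_eq_of_max (hc : IsCompact K) {u : E} {x₀ : E} (hx₀ : x₀ ∈ K)
    (hmax : ∀ x ∈ K, ⟪x, u⟫ ≤ ⟪x₀, u⟫) : suppFn K u = ⟪x₀, u⟫ := by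
  apply IsGreatest.csSup_eq
  constructor
  · exact Set.mem_image_of_mem _ hx₀
  · rintro _ ⟨x, hx, rfl⟩
    exact hmax x hx

lemma le_suppFn (hc : IsCompact K) {x : E} (hx : x ∈ K) (u : E) :
    ⟪x, u⟫ ≤ suppFn K u :=
  le_csSup ((hc.image (cont_inner u)).bddAbove) (Set.mem_image_of_mem _ hx)

lemma exists_max (hc : IsCompact K) (hne : K.Nonempty) (u : E) :
    ∃ x₀ ∈ K, ∀ x ∈ K, ⟪x, u⟫ ≤ ⟪x₀, u⟫ := by
  obtain ⟨x₀, hx₀, hmax⟩ := hc.exists_isMaxOn hne ((cont_inner u).continuousOn)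
  exact ⟨x₀, hx₀, fun x hx => hmax hx⟩

/-- Diameter bound from constant width one. -/
lemma dist_le_one (hK : IsBodyOfConstantWidthOne K) {p q : E} (hp : p ∈ K) (hq : q ∈ K) :
    ‖p - q‖ ≤ 1 := by
  obtain ⟨hne, hc, hconv, hw⟩ := hK
  have h1 : ⟪p, p - q⟫ ≤ suppFn K (p - q) := le_suppFn hc hp _
  have h2 : ⟪q, -(p - q)⟫ ≤ suppFn K (-(p - q)) := le_suppFn hc hq _
  have hsum : ⟪p, p - q⟫ + ⟪q, -(p - q)⟫ ≤ ‖p - q‖ := by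
    rw [← hw (p - q)]; exact add_le_add h1 h2
  have hid : ⟪p, p - q⟫ + ⟪q, -(p - q)⟫ = ‖p - q‖ ^ 2 := by
    rw [inner_neg_right, ← sub_eq_add_neg, ← inner_sub_left, real_inner_self_eq_norm_sq]
  rw [hid] at hsum
  nlinarith [norm_nonneg (p - q)]

/-- The gradient of the support function at `w ≠ 0` equals any maximizer of `⟪·, w⟫` on `K`. -/
lemma gradient_eq_max (hK : IsBodyOfConstantWidthOne K) {w x₀ : E}
    (hdiff : DifferentiableAt ℝ (suppFn K) w)
    (hx₀ : x₀ ∈ K) (hmax : ∀ x ∈ K, ⟪x, w⟫ ≤ ⟪x₀, w⟫) :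
    gradient (suppFn K) w = x₀ := by
  obtain ⟨hne, hc, hconv, hwid⟩ := hK
  set g : E → ℝ := fun z => suppFn K z - ⟪x₀, z⟫ with hg
  have hgw : g w = 0 := by
    simp [hg, suppFn_eq_of_max hc hx₀ hmax]
  have hgnn : ∀ z, 0 ≤ g z := fun z => sub_nonneg.2 (le_suppFn hc hx₀ z)
  have hmin : IsLocalMin g w := by
    apply Filter.Eventually.of_forall
    intro z
    rw [hgw]; exact hgnn z
  have hinner : HasFDerivAt (fun z : E => ⟪x₀, z⟫) (InnerProductSpace.toDual ℝ E x₀) w := by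
    have := (InnerProductSpace.toDual ℝ E x₀).hasFDerivAt (x := w)
    convert this using 2
    simp
  have hgd : DifferentiableAt ℝ g w := hdiff.sub hinner.differentiableAt
  have hfz : fderiv ℝ g w = 0 := hmin.fderiv_eq_zero
  have hgd' : HasFDerivAt g 0 w := hfz ▸ hgd.hasFDerivAt
  have hH : HasFDerivAt (suppFn K) (InnerProductSpace.toDual ℝ E x₀) w := by
    have := hgd'.add hinner
    simpa [hg, Pi.add_def] using this
  have : HasGradientAt (suppFn K) x₀ w := hasGradientAt_iff_hasFDerivAt.2 hH
  exact this.gradient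

/-- 0-homogeneity of the gradient. -/
lemma gradient_smul (hK : IsBodyOfConstantWidthOne K)
    (hdiff : ∀ u : E, u ≠ 0 → DifferentiableAt ℝ (suppFn K) u)
    {u : E} (hu : u ≠ 0) {c : ℝ} (hc : 0 < c) :
    gradient (suppFn K) (c • u) = gradient (suppFn K) u := by
  obtain ⟨x₀, hx₀, hmax⟩ := exists_max hK.2.1 hK.1 u
  have h1 : gradient (suppFn K) u = x₀ := gradient_eq_max hK (hdiff u hu) hx₀ hmax
  have hcu : c • u ≠ 0 := smul_ne_zero hc.ne' hu
  have hmax' : ∀ x ∈ K, ⟪x, c • u⟫ ≤ ⟪x₀, c • u⟫ := by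
    intro x hx
    rw [real_inner_smul_right, real_inner_smul_right]
    exact mul_le_mul_of_nonneg_left (hmax x hx) hc.le
  rw [h1, gradient_eq_max hK (hdiff _ hcu) hx₀ hmax']

/-- Key estimate: `∇H` is 1-Lipschitz on the unit sphere. -/
lemma key (hK : IsBodyOfConstantWidthOne K)
    (hdiff : ∀ u : E, u ≠ 0 → DifferentiableAt ℝ (suppFn K) u)
    {u v : E} (hu : ‖u‖ = 1) (hv : ‖v‖ = 1) :
    ‖gradient (suppFn K) u - gradient (suppFn K) v‖ ≤ ‖u - v‖ := by
  have hc := hK.2.1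
  have hne := hK.1
  have hwid := hK.2.2.2
  have hu0 : u ≠ 0 := by intro h; rw [h] at hu; simp at hu
  have hv0 : v ≠ 0 := by intro h; rw [h] at hv; simp at hv
  obtain ⟨x₀, hx₀, hmaxx⟩ := exists_max hc hne u
  obtain ⟨y₀, hy₀, hmaxy⟩ := exists_max hc hne v
  obtain ⟨z₁, hz₁, hmaxz₁⟩ := exists_max hc hne (-u)
  obtain ⟨z₂, hz₂, hmaxz₂⟩ := exists_max hc hne (-v)
  have hgx : gradient (suppFn K) u = x₀ := gradient_eq_max hK (hdiff u hu0) hx₀ hmaxx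
  have hgy : gradient (suppFn K) v = y₀ := gradient_eq_max hK (hdiff v hv0) hy₀ hmaxy
  -- the normal chord identity : x₀ - z₁ = u
  have chord : ∀ (w p q : E), ‖w‖ = 1 → p ∈ K → q ∈ K →
      suppFn K w = ⟪p, w⟫ → suppFn K (-w) = ⟪q, -w⟫ → p - q = w := by
    intro w p q hw hp hq hP hQ
    have hinner : ⟪p - q, w⟫ = 1 := by
      have := hwid w
      rw [hP, hQ, inner_neg_right, hw] at this
      rw [inner_sub_left]; linarith
    have hd : ‖p - q‖ ≤ 1 := dist_le_one hK hp hq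
    have hexp : ‖(p - q) - w‖ ^ 2 = ‖p - q‖ ^ 2 - 2 * ⟪p - q, w⟫ + ‖w‖ ^ 2 := by
      rw [norm_sub_sq_real]
    have : ‖(p - q) - w‖ ^ 2 ≤ 0 := by
      rw [hexp, hinner, hw]
      nlinarith [norm_nonneg (p - q)]
    have : ‖(p - q) - w‖ = 0 := by
      nlinarith [norm_nonneg ((p - q) - w)]
    exact sub_eq_zero.1 (norm_eq_zero.1 this)
  have hx₀z : x₀ - z₁ = u :=
    chord u x₀ z₁ hu hx₀ hz₁ (suppFn_eq_of_max hc hx₀ hmaxx) (suppFn_eq_of_max hc hz₁ hmaxz₁)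
  have hy₀z : y₀ - z₂ = v :=
    chord v y₀ z₂ hv hy₀ hz₂ (suppFn_eq_of_max hc hy₀ hmaxy) (suppFn_eq_of_max hc hz₂ hmaxz₂)
  -- two ball estimates
  have hb1 : ‖y₀ - z₁‖ ≤ 1 := dist_le_one hK hy₀ hz₁
  have hb2 : ‖x₀ - z₂‖ ≤ 1 := dist_le_one hK hx₀ hz₂
  have e1 : y₀ - z₁ = (y₀ - x₀) + u := by rw [← hx₀z]; abel
  have e2 : x₀ - z₂ = (x₀ - y₀) + v := by rw [← hy₀z]; abel
  have q1 : ⟪y₀ - x₀, u⟫ ≤ -(‖x₀ - y₀‖ ^ 2) / 2 := by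
    have h := hb1
    rw [e1] at h
    have hexp := norm_add_sq_real (y₀ - x₀) u
    have h2 : ‖(y₀ - x₀) + u‖ ^ 2 ≤ 1 := by nlinarith [norm_nonneg ((y₀ - x₀) + u)]
    have hn : ‖y₀ - x₀‖ = ‖x₀ - y₀‖ := norm_sub_rev _ _
    rw [hexp, hn, hu] at h2
    nlinarith
  have q2 : ⟪x₀ - y₀, v⟫ ≤ -(‖x₀ - y₀‖ ^ 2) / 2 := by
    have h := hb2
    rw [e2] at h
    have hexp := norm_add_sq_real (x₀ - y₀) v
    have h2 : ‖(x₀ - y₀) + v‖ ^ 2 ≤ 1 := by nlinarith [norm_nonneg ((x₀ - y₀) + v)]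
    rw [hexp, hv] at h2
    nlinarith
  have hmono : ‖x₀ - y₀‖ ^ 2 ≤ ⟪x₀ - y₀, u - v⟫ := by
    have : ⟪x₀ - y₀, u - v⟫ = -⟪y₀ - x₀, u⟫ - ⟪x₀ - y₀, v⟫ := by
      rw [inner_sub_right]
      have : (y₀ - x₀ : E) = -(x₀ - y₀) := by abel
      rw [this, inner_neg_left]
      ring
    rw [this]
    linarith
  have hcs : ⟪x₀ - y₀, u - v⟫ ≤ ‖x₀ - y₀‖ * ‖u - v‖ := real_inner_le_norm _ _
  rw [hgx, hgy]
  nlinarith [norm_nonneg (x₀ - y₀), norm_nonneg (u - v), sq_nonneg (‖x₀ - y₀‖ - ‖u - v‖)]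

end GradSuppFnAux

theorem gradient_suppFn_lipschitz
    (K : Set (EuclideanSpace ℝ (Fin 3))) (hK : IsBodyOfConstantWidthOne K)
    (hdiff : ∀ u : EuclideanSpace ℝ (Fin 3), u ≠ 0 → DifferentiableAt ℝ (suppFn K) u)
    (r : ℝ) (hr : 0 < r) (u v : EuclideanSpace ℝ (Fin 3))
    (hu : r ≤ ‖u‖) (hv : r ≤ ‖v‖) :
    ‖gradient (suppFn K) u - gradient (suppFn K) v‖ ≤
      (1 / r) * (1 + Real.pi / 2) * ‖u - v‖ := by
  have hu0 : u ≠ 0 := by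
    intro h; rw [h, norm_zero] at hu; linarith
  have hv0 : v ≠ 0 := by
    intro h; rw [h, norm_zero] at hv; linarith
  have hau : (0:ℝ) < ‖u‖ := lt_of_lt_of_le hr hu
  have hav : (0:ℝ) < ‖v‖ := lt_of_lt_of_le hr hv
  set uh : EuclideanSpace ℝ (Fin 3) := ‖u‖⁻¹ • u with huh
  set vh : EuclideanSpace ℝ (Fin 3) := ‖v‖⁻¹ • v with hvh
  have huh0 : uh ≠ 0 := smul_ne_zero (inv_ne_zero hau.ne') hu0
  have hvh0 : vh ≠ 0 := smul_ne_zero (inv_ne_zero hav.ne') hv0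
  have huh1 : ‖uh‖ = 1 := norm_smul_inv_norm hu0
  have hvh1 : ‖vh‖ = 1 := norm_smul_inv_norm hv0
  have hgu : gradient (suppFn K) u = gradient (suppFn K) uh := by
    have : ‖u‖ • uh = u := by rw [huh, smul_inv_smul₀ hau.ne']
    rw [← this, GradSuppFnAux.gradient_smul hK hdiff huh0 hau]
  have hgv : gradient (suppFn K) v = gradient (suppFn K) vh := by
    have : ‖v‖ • vh = v := by rw [hvh, smul_inv_smul₀ hav.ne']
    rw [← this, GradSuppFnAux.gradient_smul hK hdiff hvh0 hav]
  have hkey : ‖gradient (suppFn K) uh - gradient (suppFn K) vh‖ ≤ ‖uh - vh‖ :=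
    GradSuppFnAux.key hK hdiff huh1 hvh1
  -- normalization Lipschitz bound
  have hsplit : uh - vh = ‖u‖⁻¹ • (u - v) + (‖u‖⁻¹ - ‖v‖⁻¹) • v := by
    rw [huh, hvh]; module
  have habs : |‖u‖ - ‖v‖| ≤ ‖u - v‖ := abs_norm_sub_norm_le u v
  have hnorm2 : ‖(‖u‖⁻¹ - ‖v‖⁻¹) • v‖ = |‖u‖⁻¹ - ‖v‖⁻¹| * ‖v‖ := by
    rw [norm_smul, Real.norm_eq_abs]
  have hdd : |‖u‖⁻¹ - ‖v‖⁻¹| * ‖v‖ ≤ ‖u - v‖ / ‖u‖ := by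
    have hid : ‖u‖⁻¹ - ‖v‖⁻¹ = (‖v‖ - ‖u‖) / (‖u‖ * ‖v‖) := by
      field_simp
    have heq : |‖u‖⁻¹ - ‖v‖⁻¹| * ‖v‖ = |‖u‖ - ‖v‖| / ‖u‖ := by
      rw [hid, abs_div, abs_of_pos (mul_pos hau hav), abs_sub_comm]
      field_simp
    rw [heq]
    gcongr
  have hnlip : ‖uh - vh‖ ≤ (2 / r) * ‖u - v‖ := by
    calc ‖uh - vh‖ ≤ ‖‖u‖⁻¹ • (u - v)‖ + ‖(‖u‖⁻¹ - ‖v‖⁻¹) • v‖ := by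
          rw [hsplit]; exact norm_add_le _ _
      _ ≤ ‖u - v‖ / ‖u‖ + ‖u - v‖ / ‖u‖ := by
          apply add_le_add
          · rw [norm_smul, Real.norm_eq_abs, abs_of_pos (inv_pos.2 hau)]
            rw [inv_mul_eq_div]
          · rw [hnorm2]; exact hdd
      _ = 2 * (‖u - v‖ / ‖u‖) := by ring
      _ ≤ 2 * (‖u - v‖ / r) := by gcongr
      _ = (2 / r) * ‖u - v‖ := by ring
  have hpi : (2:ℝ) ≤ 1 + Real.pi / 2 := by
    have := Real.pi_gt_three
    linarith
  calc ‖gradient (suppFn K) u - gradient (suppFn K) v‖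
      = ‖gradient (suppFn K) uh - gradient (suppFn K) vh‖ := by rw [hgu, hgv]
    _ ≤ ‖uh - vh‖ := hkey
    _ ≤ (2 / r) * ‖u - v‖ := hnlip
    _ ≤ (1 / r) * (1 + Real.pi / 2) * ‖u - v‖ := by
        apply mul_le_mul_of_nonneg_right _ (norm_nonneg _)
        rw [div_eq_mul_inv, one_div]
        have := mul_le_mul_of_nonneg_right hpi (inv_nonneg.2 hr.le)
        linarith
end
end

section
/- Let K ⊆ ℝ³ be a body of constant width one with support function H_K, let u ∈ ℝ³ \ {0}, and suppose H_K is twice differentiable (in the Fréchet sense) at both u and −u. Then for every unit vector w ∈ ℝ³, 0 ≤ D²H_K(u)(w, w) ≤ 1/‖u‖. -/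
open MeasureTheory Metric Filter
open scoped RealInnerProductSpace

noncomputable section

lemma suppFn_convexOn (K : Set (EuclideanSpace ℝ (Fin 3))) (hne : K.Nonempty)
    (hcpt : IsCompact K) : ConvexOn ℝ Set.univ (suppFn K) := by
  have hbdd : ∀ v : EuclideanSpace ℝ (Fin 3), BddAbove ((fun x => ⟪x, v⟫) '' K) := by
    intro v
    exact (hcpt.image (continuous_id.inner continuous_const)).bddAbove
  refine ⟨convex_univ, ?_⟩
  intro x _ y _ a b ha hb hab
  refine csSup_le (hne.image _) ?_
  rintro r ⟨z, hz, rfl⟩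
  have hexp : ⟪z, a • x + b • y⟫ = a * ⟪z, x⟫ + b * ⟪z, y⟫ := by
    rw [inner_add_right, real_inner_smul_right, real_inner_smul_right]
  simp only [hexp, smul_eq_mul]
  gcongr
  · exact le_csSup (hbdd x) ⟨z, hz, rfl⟩
  · exact le_csSup (hbdd y) ⟨z, hz, rfl⟩

lemma line_second_deriv {f : EuclideanSpace ℝ (Fin 3) → ℝ} (u w : EuclideanSpace ℝ (Fin 3))
    (h1 : ∀ᶠ y in nhds u, DifferentiableAt ℝ f y)
    (h2 : DifferentiableAt ℝ (fderiv ℝ f) u) :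
    (∀ᶠ t in nhds (0:ℝ), DifferentiableAt ℝ (fun s : ℝ => f (u + s • w)) t) ∧
    (deriv (fun s : ℝ => f (u + s • w)) =ᶠ[nhds (0:ℝ)] fun t => fderiv ℝ f (u + t • w) w) ∧
    HasDerivAt (deriv (fun s : ℝ => f (u + s • w))) (fderiv ℝ (fderiv ℝ f) u w w) 0 := by
  have hL : ∀ t : ℝ, HasDerivAt (fun s : ℝ => u + s • w) w t := by
    intro t
    simpa using ((hasDerivAt_id t).smul_const w).const_add u
  have hcont : Continuous fun s : ℝ => u + s • w :=
    continuous_const.add (continuous_id.smul continuous_const)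
  have hmem : ∀ᶠ t in nhds (0:ℝ), DifferentiableAt ℝ f (u + t • w) := by
    have h := hcont.tendsto 0
    simp only [zero_smul, add_zero] at h
    exact h.eventually h1
  have hHD : ∀ᶠ t in nhds (0:ℝ),
      HasDerivAt (fun s : ℝ => f (u + s • w)) (fderiv ℝ f (u + t • w) w) t := by
    filter_upwards [hmem] with t ht
    exact ht.hasFDerivAt.comp_hasDerivAt t (hL t)
  refine ⟨hHD.mono fun t ht => ht.differentiableAt, hHD.mono fun t ht => ht.deriv, ?_⟩
  have hγ : HasDerivAt (fun t : ℝ => fderiv ℝ f (u + t • w)) (fderiv ℝ (fderiv ℝ f) u w) 0 := by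
    have h2' : HasFDerivAt (fderiv ℝ f) (fderiv ℝ (fderiv ℝ f) u) (u + (0:ℝ) • w) := by
      simpa using h2.hasFDerivAt
    exact h2'.comp_hasDerivAt 0 (hL 0)
  have happ : HasDerivAt (fun t : ℝ => fderiv ℝ f (u + t • w) w)
      (fderiv ℝ (fderiv ℝ f) u w w) 0 := by
    simpa using hγ.clm_apply (hasDerivAt_const (0:ℝ) w)
  exact happ.congr_of_eventuallyEq (hHD.mono fun t ht => ht.deriv)

lemma second_deriv_nonneg_of_convex {f : EuclideanSpace ℝ (Fin 3) → ℝ}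
    (hf : ConvexOn ℝ Set.univ f) (u w : EuclideanSpace ℝ (Fin 3))
    (h1 : ∀ᶠ y in nhds u, DifferentiableAt ℝ f y)
    (h2 : DifferentiableAt ℝ (fderiv ℝ f) u) :
    0 ≤ fderiv ℝ (fderiv ℝ f) u w w := by
  obtain ⟨hdiff, _, hder⟩ := line_second_deriv u w h1 h2
  set g : ℝ → ℝ := fun s : ℝ => f (u + s • w) with hg
  have hgcvx : ConvexOn ℝ Set.univ g := by
    refine ⟨convex_univ, ?_⟩
    intro s _ t _ a b ha hb hab
    have key : u + (a • s + b • t) • w = a • (u + s • w) + b • (u + t • w) := by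
      have hb1 : b = 1 - a := by linarith
      subst hb1
      simp only [smul_eq_mul]
      module
    show f (u + (a • s + b • t) • w) ≤ a • g s + b • g t
    rw [key]
    exact hf.2 (Set.mem_univ _) (Set.mem_univ _) ha hb hab
  obtain ⟨ε, hε, hball⟩ := Metric.eventually_nhds_iff.mp hdiff
  have hmono : MonotoneOn (deriv g) (ball (0:ℝ) ε) := by
    refine (hgcvx.subset (Set.subset_univ _) (convex_ball _ _)).monotoneOn_deriv ?_
    intro x hx
    exact hball (by simpa [Real.dist_eq] using hx)
  have h0mem : (0:ℝ) ∈ ball (0:ℝ) ε := by simpa using hε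
  rw [hasDerivAt_iff_tendsto_slope] at hder
  refine ge_of_tendsto hder ?_
  have hball_ev : ∀ᶠ t in nhdsWithin (0:ℝ) {(0:ℝ)}ᶜ, t ∈ ball (0:ℝ) ε :=
    eventually_nhdsWithin_of_eventually_nhds
      (by filter_upwards [Metric.ball_mem_nhds (0:ℝ) hε] with t ht using ht)
  filter_upwards [hball_ev, self_mem_nhdsWithin] with t htb htne
  have htne' : t ≠ 0 := htne
  rw [slope_def_field]
  rcases lt_or_gt_of_ne htne' with hlt | hgt
  · refine div_nonneg_iff.mpr (Or.inr ⟨?_, ?_⟩)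
    · simpa using sub_nonpos.mpr (hmono htb h0mem hlt.le)
    · simpa using hlt.le
  · apply div_nonneg
    · simpa using sub_nonneg.mpr (hmono h0mem htb hgt.le)
    · simpa using hgt.le

theorem second_deriv_suppFn_bounds
    (K : Set (EuclideanSpace ℝ (Fin 3))) (hK : IsBodyOfConstantWidthOne K)
    (u : EuclideanSpace ℝ (Fin 3)) (hu : u ≠ 0)
    (h₁ : ∀ᶠ y in nhds u, DifferentiableAt ℝ (suppFn K) y)
    (h₂ : DifferentiableAt ℝ (fderiv ℝ (suppFn K)) u)
    (h₃ : ∀ᶠ y in nhds (-u), DifferentiableAt ℝ (suppFn K) y)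
    (h₄ : DifferentiableAt ℝ (fderiv ℝ (suppFn K)) (-u))
    (w : EuclideanSpace ℝ (Fin 3)) (hw : ‖w‖ = 1) :
    0 ≤ fderiv ℝ (fderiv ℝ (suppFn K)) u w w ∧
      fderiv ℝ (fderiv ℝ (suppFn K)) u w w ≤ 1 / ‖u‖ := by
  obtain ⟨hne, hcpt, -, hw1⟩ := hK
  have hcvx := suppFn_convexOn K hne hcpt
  refine ⟨second_deriv_nonneg_of_convex hcvx u w h₁ h₂, ?_⟩
  set H := suppFn K with hH
  set A := fderiv ℝ (fderiv ℝ H) u w w with hA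
  have hB0 : 0 ≤ fderiv ℝ (fderiv ℝ H) (-u) (-w) (-w) :=
    second_deriv_nonneg_of_convex hcvx (-u) (-w) h₃ h₄
  set B := fderiv ℝ (fderiv ℝ H) (-u) (-w) (-w) with hB
  obtain ⟨hgd, -, hgder⟩ := line_second_deriv u w h₁ h₂
  obtain ⟨hhd, -, hhder⟩ := line_second_deriv (-u) (-w) h₃ h₄
  set g : ℝ → ℝ := fun s : ℝ => H (u + s • w) with hg
  set h : ℝ → ℝ := fun s : ℝ => H (-u + s • (-w)) with hh
  set n : ℝ → ℝ := fun s : ℝ => ‖u + s • w‖ with hn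
  have hn_eq : ∀ t : ℝ, n t = g t + h t := by
    intro t
    have hcw := hw1 (u + t • w)
    have hneg : -(u + t • w) = -u + t • (-w) := by module
    rw [hneg] at hcw
    exact hcw.symm
  have hnfun : n = fun t => g t + h t := funext hn_eq
  have hder_n : deriv n =ᶠ[nhds (0:ℝ)] fun t => deriv g t + deriv h t := by
    filter_upwards [hgd, hhd] with t hgt hht
    rw [hnfun]
    exact deriv_add hgt hht
  have hnder : HasDerivAt (deriv n) (A + B) 0 :=
    (hgder.add hhder).congr_of_eventuallyEq hder_n
  -- explicit formula for n
  set r : ℝ := ‖u‖ with hr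
  have hrpos : 0 < r := norm_pos_iff.mpr hu
  set c : ℝ := ⟪u, w⟫ with hc
  set q : ℝ → ℝ := fun t => r ^ 2 + 2 * c * t + t ^ 2 with hq
  have hq_eq : ∀ t : ℝ, n t = Real.sqrt (q t) := by
    intro t
    have hip : ⟪u + t • w, u + t • w⟫ = q t := by
      rw [real_inner_add_add_self, real_inner_smul_right, real_inner_smul_left,
        real_inner_smul_right, real_inner_self_eq_norm_sq, real_inner_self_eq_norm_sq, hw]
      simp only [hq]; ring
    rw [hn]
    show ‖u + t • w‖ = Real.sqrt (q t)
    rw [norm_eq_sqrt_real_inner, hip]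
  have hqpos : ∀ t : ℝ, |t| < r → 0 < q t := by
    intro t ht
    have hnorm : r - |t| ≤ ‖u + t • w‖ := by
      have h1' : r ≤ ‖u + t • w‖ + ‖t • w‖ := by
        calc r = ‖(u + t • w) - t • w‖ := by rw [hr]; congr 1; abel
        _ ≤ ‖u + t • w‖ + ‖t • w‖ := norm_sub_le _ _
      have h2' : ‖t • w‖ = |t| := by rw [norm_smul, hw]; simp
      linarith
    have hnp : 0 < ‖u + t • w‖ := lt_of_lt_of_le (by linarith) hnorm
    have : q t = ‖u + t • w‖ ^ 2 := by
      rw [← real_inner_self_eq_norm_sq]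
      have hip : ⟪u + t • w, u + t • w⟫ = q t := by
        rw [real_inner_add_add_self, real_inner_smul_right, real_inner_smul_left,
          real_inner_smul_right, real_inner_self_eq_norm_sq, real_inner_self_eq_norm_sq, hw]
        simp only [hq]; ring
      rw [hip]
    rw [this]
    positivity
  have hq' : ∀ t : ℝ, HasDerivAt q (2 * c + 2 * t) t := by
    intro t
    have h1' := (((hasDerivAt_id t).const_mul (2 * c)).const_add (r ^ 2)).add (hasDerivAt_pow 2 t)
    simp only [mul_one, pow_one, Nat.cast_ofNat] at h1'
    exact h1'.congr_deriv (by norm_num)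
  have hsq : ∀ t : ℝ, |t| < r →
      HasDerivAt n (1 / (2 * Real.sqrt (q t)) * (2 * c + 2 * t)) t := by
    intro t ht
    have hst : HasDerivAt (fun s => Real.sqrt (q s))
        (1 / (2 * Real.sqrt (q t)) * (2 * c + 2 * t)) t :=
      (Real.hasDerivAt_sqrt (hqpos t ht).ne').comp t (hq' t)
    have heq : (fun s : ℝ => Real.sqrt (q s)) = n := funext fun s => (hq_eq s).symm
    rwa [heq] at hst
  set m : ℝ → ℝ := fun t => (c + t) / Real.sqrt (q t) with hm
  have hder_nm : deriv n =ᶠ[nhds (0:ℝ)] m := by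
    have habs : ∀ᶠ t in nhds (0:ℝ), |t| < r := by
      have := eventually_abs_sub_lt (0:ℝ) hrpos
      simpa using this
    filter_upwards [habs] with t ht
    have hd := (hsq t ht).deriv
    rw [hd, hm]
    have hs : Real.sqrt (q t) ≠ 0 := (Real.sqrt_pos.mpr (hqpos t ht)).ne'
    field_simp
  have hsq0 : Real.sqrt (q 0) = r := by
    have : q 0 = r ^ 2 := by simp [hq]
    rw [this, Real.sqrt_sq hrpos.le]
  have hm_has : HasDerivAt m ((1 * Real.sqrt (q 0) - (c + 0) *
      (1 / (2 * Real.sqrt (q 0)) * (2 * c + 2 * 0))) / Real.sqrt (q 0) ^ 2) 0 := by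
    have hnum : HasDerivAt (fun t : ℝ => c + t) 1 0 := (hasDerivAt_id 0).const_add c
    have hden : HasDerivAt (fun s : ℝ => Real.sqrt (q s))
        (1 / (2 * Real.sqrt (q 0)) * (2 * c + 2 * 0)) 0 :=
      (Real.hasDerivAt_sqrt (hqpos 0 (by simpa using hrpos)).ne').comp 0 (hq' 0)
    exact hnum.div hden (by rw [hsq0]; exact hrpos.ne')
  have hnder' : HasDerivAt (deriv n) ((1 * Real.sqrt (q 0) - (c + 0) *
      (1 / (2 * Real.sqrt (q 0)) * (2 * c + 2 * 0))) / Real.sqrt (q 0) ^ 2) 0 :=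
    hm_has.congr_of_eventuallyEq hder_nm
  have hAB : A + B = (1 * Real.sqrt (q 0) - (c + 0) *
      (1 / (2 * Real.sqrt (q 0)) * (2 * c + 2 * 0))) / Real.sqrt (q 0) ^ 2 :=
    hnder.unique hnder'
  rw [hsq0] at hAB
  have hV : (1 * r - (c + 0) * (1 / (2 * r) * (2 * c + 2 * 0))) / r ^ 2
      = 1 / r - c ^ 2 / r ^ 3 := by
    field_simp
    ring
  rw [hV] at hAB
  have hc2 : 0 ≤ c ^ 2 / r ^ 3 := by positivity
  have : A ≤ 1 / r := by linarith
  exact this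
end
end

section
/- For every ξ ∈ P⊥, the quantity χ*(ξ) := sup{∫_{S²} g dξ : g ∈ C} satisfies χ*(ξ) ≤ (√(3/8) − 1/2)·inf{‖ξ + η‖ : η ∈ C⊥}, where ‖·‖ is the total variation norm. -/
open MeasureTheory Metric Filter
open scoped RealInnerProductSpace

noncomputable section

/-- The unit sphere `S²` in `ℝ³`, as a type. -/
abbrev Sph : Type := Metric.sphere (0 : EuclideanSpace ℝ (Fin 3)) 1

/-- The integral of a function against a finite signed Borel measure on `S²`. -/
def sint (ξ : SignedMeasure Sph) (g : Sph → ℝ) : ℝ :=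
  (∫ u, g u ∂ξ.toJordanDecomposition.posPart) - ∫ u, g u ∂ξ.toJordanDecomposition.negPart

/-- The total variation norm of a finite signed Borel measure on `S²`. -/
def tvNorm (ξ : SignedMeasure Sph) : ℝ := (ξ.totalVariation Set.univ).toReal

/-- `C`: continuous functions `g` on `S²` such that `g + 1/2` is the sphere restriction of the
support function of a body of constant width one. -/
def Cw : Set (Sph → ℝ) :=
  {g | Continuous g ∧ ∃ K : Set (EuclideanSpace ℝ (Fin 3)), IsBodyOfConstantWidthOne K ∧
    ∀ u : Sph, g u + 1 / 2 = suppFn K u}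

/-- `P⊥`: signed measures annihilating the restrictions of linear functions. -/
def Pperp : Set (SignedMeasure Sph) :=
  {ξ | ∀ a : EuclideanSpace ℝ (Fin 3), sint ξ (fun u => ⟪a, (u : EuclideanSpace ℝ (Fin 3))⟫) = 0}

/-- `C⊥`: signed measures annihilating every element of `C`. -/
def Cperp : Set (SignedMeasure Sph) :=
  {η | ∀ g ∈ Cw, sint η g = 0}


local notation "E3" => EuclideanSpace ℝ (Fin 3)

set_option maxHeartbeats 1000000


lemma jung_finset (s : Finset E3) (hs : s.Nonempty) (hcard : s.card ≤ 4)
    (hdiam : ∀ p ∈ s, ∀ q ∈ s, dist p q ≤ 1) :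
    ∃ c : E3, ∀ p ∈ s, dist p c ≤ Real.sqrt (3/8) := by
  classical
  set f : E3 → ℝ := fun c => s.sup' hs fun p => dist p c with hf
  have hf_cont : Continuous f := by
    rw [continuous_iff_continuousAt]
    intro x
    exact ContinuousAt.finset_sup'_apply hs fun p _ =>
      ((continuous_const.dist continuous_id).continuousAt)
  obtain ⟨p0, hp0⟩ := id hs
  have hfp0 : 0 ≤ f p0 := le_trans dist_nonneg (Finset.le_sup' (fun p => dist p p0) hp0)
  obtain ⟨c, hcB, hmin⟩ := (isCompact_closedBall p0 (f p0)).exists_isMinOn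
    ⟨p0, mem_closedBall_self hfp0⟩ hf_cont.continuousOn
  have hglob : ∀ y, f c ≤ f y := by
    intro y
    by_cases hy : y ∈ closedBall p0 (f p0)
    · exact hmin hy
    · have h1 : f p0 < dist y p0 := by simpa [mem_closedBall] using hy
      have h2 : dist p0 y ≤ f y := Finset.le_sup' (fun p => dist p y) hp0
      have h3 : f c ≤ f p0 := hmin (mem_closedBall_self hfp0)
      rw [dist_comm] at h1
      linarith
  set R := f c with hR
  by_cases hRle : R ≤ Real.sqrt (3/8)
  · exact ⟨c, fun p hp => le_trans (Finset.le_sup' (fun q => dist q c) hp) hRle⟩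
  push_neg at hRle
  exfalso
  have hRpos : 0 < R := lt_of_le_of_lt (Real.sqrt_nonneg _) hRle
  set T : Finset E3 := s.filter (fun p => dist p c = R) with hT
  have hTs : T ⊆ s := Finset.filter_subset _ _
  have hTne : T.Nonempty := by
    obtain ⟨p, hp, hpe⟩ := Finset.exists_mem_eq_sup' hs (fun p => dist p c)
    exact ⟨p, Finset.mem_filter.2 ⟨hp, hpe.symm⟩⟩
  have hTfin : (T : Set E3).Finite := T.finite_toSet
  have hhull_cpt : IsCompact (convexHull ℝ (T : Set E3)) := hTfin.isCompact_convexHull ℝ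
  have hhull_ne : (convexHull ℝ (T : Set E3)).Nonempty :=
    ⟨hTne.choose, subset_convexHull ℝ _ hTne.choose_spec⟩
  -- Step: c is in the convex hull of the touching points
  have hc_mem : c ∈ convexHull ℝ (T : Set E3) := by
    by_contra hc
    obtain ⟨v, hv, hvmin⟩ := hhull_cpt.exists_isMinOn hhull_ne
      ((continuous_const.dist continuous_id).continuousOn : ContinuousOn (fun w => dist c w) _)
    haveI : Nonempty ↥(convexHull ℝ (T : Set E3)) := ⟨⟨v, hv⟩⟩
    have hvne : v ≠ c := fun h => hc (h ▸ hv)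
    have key : ∀ w ∈ convexHull ℝ (T : Set E3), ⟪c - v, w - v⟫ ≤ 0 := by
      rw [← norm_eq_iInf_iff_real_inner_le_zero (convex_convexHull ℝ _) hv]
      apply le_antisymm
      · exact le_ciInf fun ⟨w, hw⟩ => by
          simpa [dist_eq_norm] using hvmin hw
      · exact ciInf_le ⟨0, fun x ⟨w, hw⟩ => hw ▸ norm_nonneg _⟩ (⟨v, hv⟩ : convexHull ℝ (T : Set E3))
    set d := v - c with hd
    have hdne : d ≠ 0 := sub_ne_zero.2 hvne
    have hdpos : 0 < ‖d‖ := norm_pos_iff.2 hdne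
    have hkey : ∀ p ∈ T, ‖d‖ ^ 2 ≤ ⟪d, p - c⟫ := by
      intro p hp
      have h1 := key p (subset_convexHull ℝ _ (by exact_mod_cast hp))
      have h2 : (0:ℝ) ≤ ⟪d, p - v⟫ := by
        have h1' : ⟪c - v, p - v⟫ ≤ 0 := h1
        have hrw : d = -(c - v) := by rw [hd]; abel
        rw [hrw, inner_neg_left]; linarith
      have h3 : p - c = (p - v) + d := by rw [hd]; abel
      rw [h3, inner_add_right, real_inner_self_eq_norm_sq]
      linarith
    have hev : ∀ p ∈ s, ∀ᶠ t in nhdsWithin (0:ℝ) (Set.Ioi 0), dist p (c + t • d) < R := by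
      intro p hp
      by_cases hpT : p ∈ T
      · have hIoo : Set.Ioo (0:ℝ) 1 ∈ nhdsWithin (0:ℝ) (Set.Ioi 0) :=
          Ioo_mem_nhdsGT (by norm_num)
        filter_upwards [hIoo] with t ht
        have hpc : ‖p - c‖ = R := by
          have h := (Finset.mem_filter.1 hpT).2
          rwa [dist_eq_norm] at h
        have hinner := hkey p hpT
        have hexp : dist p (c + t • d) ^ 2 =
            ‖p - c‖ ^ 2 - 2 * t * ⟪d, p - c⟫ + t ^ 2 * ‖d‖ ^ 2 := by
          rw [dist_eq_norm, show p - (c + t • d) = (p - c) - t • d by abel]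
          rw [norm_sub_sq_real, real_inner_smul_right, norm_smul, real_inner_comm]
          have hta : |t| = t := abs_of_pos ht.1
          rw [Real.norm_eq_abs, hta, mul_pow]
          ring
        have h5 : t * ‖d‖ ^ 2 ≤ t * ⟪d, p - c⟫ := mul_le_mul_of_nonneg_left hinner ht.1.le
        have ht2 : t ^ 2 ≤ t := by nlinarith [ht.1, ht.2]
        have h6 : t ^ 2 * ‖d‖ ^ 2 ≤ t * ‖d‖ ^ 2 := mul_le_mul_of_nonneg_right ht2 (sq_nonneg _)
        have h7 : 0 < t * ‖d‖ ^ 2 := mul_pos ht.1 (pow_pos hdpos 2)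
        have hlt : dist p (c + t • d) ^ 2 < R ^ 2 := by
          rw [hexp, hpc]; linarith
        exact lt_of_pow_lt_pow_left₀ 2 hRpos.le hlt
      · have hlt : dist p c < R := by
          have h1 : dist p c ≤ R := Finset.le_sup' (fun q => dist q c) hp
          have h2 : dist p c ≠ R := fun h => hpT (Finset.mem_filter.2 ⟨hp, h⟩)
          exact lt_of_le_of_ne h1 h2
        have hcont : ContinuousAt (fun t : ℝ => dist p (c + t • d)) 0 := by
          apply Continuous.continuousAt
          exact continuous_const.dist (continuous_const.add (continuous_id.smul continuous_const))
        have htd := hcont.tendsto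
        simp only [zero_smul, add_zero] at htd
        exact ((htd.mono_left nhdsWithin_le_nhds).eventually_lt_const hlt)
    have hall : ∀ᶠ t in nhdsWithin (0:ℝ) (Set.Ioi 0), ∀ p ∈ s, dist p (c + t • d) < R :=
      (Filter.eventually_all_finset s).2 hev
    obtain ⟨t, ht⟩ := hall.exists
    have hflt : f (c + t • d) < R := (Finset.sup'_lt_iff hs).2 fun p hp => ht p hp
    exact absurd (hglob (c + t • d)) (not_le.2 hflt)
  -- Extract weights
  rw [Finset.mem_convexHull'] at hc_mem
  obtain ⟨w, hw0, hw1, hwc⟩ := hc_mem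
  have hnormT : ∀ p ∈ T, ‖p - c‖ = R := by
    intro p hp
    have h := (Finset.mem_filter.1 hp).2
    rwa [dist_eq_norm] at h
  have hzero : ∑ p ∈ T, w p • (p - c) = 0 := by
    have h : ∑ p ∈ T, w p • (p - c) = (∑ p ∈ T, w p • p) - (∑ p ∈ T, w p) • c := by
      rw [Finset.sum_smul, ← Finset.sum_sub_distrib]
      exact Finset.sum_congr rfl fun p _ => smul_sub _ _ _
    rw [h, hwc, hw1, one_smul, sub_self]
  have hS : ∑ p ∈ T, ∑ q ∈ T, w p * w q * ⟪p - c, q - c⟫ = 0 := by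
    have h : ⟪∑ p ∈ T, w p • (p - c), ∑ q ∈ T, w q • (q - c)⟫ =
        ∑ p ∈ T, ∑ q ∈ T, w p * w q * ⟪p - c, q - c⟫ := by
      rw [sum_inner]
      refine Finset.sum_congr rfl fun p _ => ?_
      rw [inner_sum]
      refine Finset.sum_congr rfl fun q _ => ?_
      rw [real_inner_smul_left, real_inner_smul_right]; ring
    rw [← h, hzero, inner_zero_left]
  have hQ : ∑ p ∈ T, ∑ q ∈ T, w p * w q * ‖p - q‖ ^ 2 = 2 * R ^ 2 := by
    have e1 : ∑ p ∈ T, ∑ q ∈ T, w p * w q * (R ^ 2 + R ^ 2) = R ^ 2 + R ^ 2 := by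
      have h : ∑ p ∈ T, ∑ q ∈ T, w p * w q * (R ^ 2 + R ^ 2) =
          ((∑ p ∈ T, w p) * (∑ q ∈ T, w q)) * (R ^ 2 + R ^ 2) := by
        rw [Finset.sum_mul_sum, Finset.sum_mul]
        exact Finset.sum_congr rfl fun p _ => by rw [Finset.sum_mul]
      rw [h, hw1]; ring
    calc ∑ p ∈ T, ∑ q ∈ T, w p * w q * ‖p - q‖ ^ 2
        = ∑ p ∈ T, ∑ q ∈ T, (w p * w q * (R ^ 2 + R ^ 2)
            - 2 * (w p * w q * ⟪p - c, q - c⟫)) := by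
          refine Finset.sum_congr rfl fun p hp => Finset.sum_congr rfl fun q hq => ?_
          have h1 : p - q = (p - c) - (q - c) := by abel
          rw [h1, norm_sub_sq_real, hnormT p hp, hnormT q hq]
          ring
      _ = (∑ p ∈ T, ∑ q ∈ T, w p * w q * (R ^ 2 + R ^ 2))
            - 2 * ∑ p ∈ T, ∑ q ∈ T, w p * w q * ⟪p - c, q - c⟫ := by
          rw [Finset.mul_sum, ← Finset.sum_sub_distrib]
          refine Finset.sum_congr rfl fun p _ => ?_
          rw [Finset.mul_sum, ← Finset.sum_sub_distrib]
      _ = 2 * R ^ 2 := by rw [e1, hS]; ring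
  have hQle : ∑ p ∈ T, ∑ q ∈ T, w p * w q * ‖p - q‖ ^ 2 ≤ 1 - ∑ p ∈ T, w p ^ 2 := by
    have key2 : ∀ p ∈ T, ∑ q ∈ T, w p * w q * ‖p - q‖ ^ 2 ≤ (∑ q ∈ T, w p * w q) - w p ^ 2 := by
      intro p hp
      have h : ∑ q ∈ T, w p * w q * ‖p - q‖ ^ 2 ≤
          ∑ q ∈ T, (w p * w q - if q = p then w p ^ 2 else 0) := by
        refine Finset.sum_le_sum fun q hq => ?_
        by_cases hqp : q = p
        · subst hqp; simp [pow_two]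
        · simp only [hqp, if_false, sub_zero]
          have hle1 : ‖p - q‖ ≤ 1 := by
            have hd := hdiam p (hTs hp) q (hTs hq); rwa [dist_eq_norm] at hd
          have hwnn : 0 ≤ w p * w q := mul_nonneg (hw0 p hp) (hw0 q hq)
          have hsq : ‖p - q‖ ^ 2 ≤ 1 := by nlinarith [norm_nonneg (p - q)]
          calc w p * w q * ‖p - q‖ ^ 2 ≤ w p * w q * 1 :=
                mul_le_mul_of_nonneg_left hsq hwnn
            _ = w p * w q := mul_one _
      rw [Finset.sum_sub_distrib, Finset.sum_ite_eq' T p (fun _ => w p ^ 2), if_pos hp] at h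
      exact h
    calc ∑ p ∈ T, ∑ q ∈ T, w p * w q * ‖p - q‖ ^ 2
        ≤ ∑ p ∈ T, ((∑ q ∈ T, w p * w q) - w p ^ 2) := Finset.sum_le_sum key2
      _ = (∑ p ∈ T, ∑ q ∈ T, w p * w q) - ∑ p ∈ T, w p ^ 2 := Finset.sum_sub_distrib _ _
      _ = 1 - ∑ p ∈ T, w p ^ 2 := by
          have h : ∑ p ∈ T, ∑ q ∈ T, w p * w q = (∑ p ∈ T, w p) * (∑ q ∈ T, w q) :=
            (Finset.sum_mul_sum _ _ _ _).symm
          rw [h, hw1]; ring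
  have hsum_sq : 1/4 ≤ ∑ p ∈ T, w p ^ 2 := by
    have hc4 : (T.card : ℝ) ≤ 4 := by
      exact_mod_cast le_trans (Finset.card_le_card hTs) hcard
    have hcs := sq_sum_le_card_mul_sum_sq (s := T) (f := w)
    rw [hw1] at hcs
    have hpos : 0 ≤ ∑ p ∈ T, w p ^ 2 := Finset.sum_nonneg fun p _ => sq_nonneg _
    nlinarith
  have hfinal : R ^ 2 ≤ 3/8 := by
    rw [hQ] at hQle; linarith
  have hle : R ≤ Real.sqrt (3/8) := (Real.le_sqrt hRpos.le (by norm_num)).mpr hfinal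
  linarith

lemma jung_compact (K : Set E3) (hK : IsCompact K) (hne : K.Nonempty)
    (hdiam : ∀ p ∈ K, ∀ q ∈ K, dist p q ≤ 1) :
    ∃ c : E3, ∀ p ∈ K, dist p c ≤ Real.sqrt (3/8) := by
  classical
  have hr : (0:ℝ) ≤ Real.sqrt (3/8) := Real.sqrt_nonneg _
  have hmain : (⋂ x : K, closedBall (x : E3) (Real.sqrt (3/8))).Nonempty := by
    apply Convex.helly_theorem_compact' (𝕜 := ℝ)
    · exact fun x => convex_closedBall _ _
    · exact fun x => isCompact_closedBall _ _
    · intro I hIcard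
      rcases I.eq_empty_or_nonempty with rfl | hIne
      · simp
      · set s : Finset E3 := I.image (fun x : ↥K => (x : E3)) with hsdef
        have hsne : s.Nonempty := by rw [hsdef]; exact hIne.image _
        have hscard : s.card ≤ 4 := by
          calc s.card ≤ I.card := Finset.card_image_le
            _ ≤ Module.finrank ℝ (EuclideanSpace ℝ (Fin 3)) + 1 := hIcard
            _ ≤ 4 := by simp
        have hsd : ∀ p ∈ s, ∀ q ∈ s, dist p q ≤ 1 := by
          intro p hp q hq
          obtain ⟨x, _, rfl⟩ := Finset.mem_image.1 hp
          obtain ⟨y, _, rfl⟩ := Finset.mem_image.1 hq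
          exact hdiam _ x.2 _ y.2
        obtain ⟨c, hc⟩ := jung_finset s hsne hscard hsd
        refine ⟨c, ?_⟩
        simp only [Set.mem_iInter]
        intro x hx
        rw [mem_closedBall, dist_comm]
        have hmem : (x : E3) ∈ s := by rw [hsdef]; exact Finset.mem_image_of_mem _ hx
        exact hc _ hmem
  obtain ⟨c, hc⟩ := hmain
  refine ⟨c, fun p hp => ?_⟩
  have := Set.mem_iInter.1 hc ⟨p, hp⟩
  rwa [mem_closedBall, dist_comm] at this


instance : Nonempty Sph := ⟨⟨EuclideanSpace.single 0 1, by simp⟩⟩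

lemma integrable_cont (μ : Measure Sph) [IsFiniteMeasure μ] {g : Sph → ℝ}
    (hg : Continuous g) : Integrable g μ := by
  apply hg.integrable_of_hasCompactSupport
  exact IsCompact.of_isClosed_subset isCompact_univ (isClosed_tsupport g) (Set.subset_univ _)

lemma sint_add_measure (ξ η : SignedMeasure Sph) {g : Sph → ℝ} (hg : Continuous g) :
    sint (ξ + η) g = sint ξ g + sint η g := by
  set P := (ξ + η).toJordanDecomposition.posPart with hP
  set N := (ξ + η).toJordanDecomposition.negPart with hN
  set p1 := ξ.toJordanDecomposition.posPart with hp1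
  set n1 := ξ.toJordanDecomposition.negPart with hn1
  set p2 := η.toJordanDecomposition.posPart with hp2
  set n2 := η.toJordanDecomposition.negPart with hn2
  have h1 : p1.toSignedMeasure - n1.toSignedMeasure = ξ :=
    ξ.toSignedMeasure_toJordanDecomposition
  have h2 : p2.toSignedMeasure - n2.toSignedMeasure = η :=
    η.toSignedMeasure_toJordanDecomposition
  have h3 : P.toSignedMeasure - N.toSignedMeasure = ξ + η :=
    (ξ + η).toSignedMeasure_toJordanDecomposition
  have hmeas : P + (n1 + n2) = N + (p1 + p2) := by
    rw [← Measure.toSignedMeasure_eq_toSignedMeasure_iff]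
    rw [Measure.toSignedMeasure_add, Measure.toSignedMeasure_add,
      Measure.toSignedMeasure_add, Measure.toSignedMeasure_add]
    have h4 : P.toSignedMeasure - N.toSignedMeasure =
        (p1.toSignedMeasure - n1.toSignedMeasure) +
        (p2.toSignedMeasure - n2.toSignedMeasure) := by rw [h1, h2, h3]
    calc P.toSignedMeasure + (n1.toSignedMeasure + n2.toSignedMeasure)
        = (P.toSignedMeasure - N.toSignedMeasure) + N.toSignedMeasure
            + n1.toSignedMeasure + n2.toSignedMeasure := by abel
      _ = N.toSignedMeasure + (p1.toSignedMeasure + p2.toSignedMeasure) := by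
          rw [h4]; abel
  have hint : ∫ u, g u ∂(P + (n1 + n2)) = ∫ u, g u ∂(N + (p1 + p2)) := by rw [hmeas]
  rw [integral_add_measure (integrable_cont _ hg) (integrable_cont _ hg),
    integral_add_measure (integrable_cont _ hg) (integrable_cont _ hg),
    integral_add_measure (integrable_cont _ hg) (integrable_cont _ hg),
    integral_add_measure (integrable_cont _ hg) (integrable_cont _ hg)] at hint
  simp only [sint]
  linarith

lemma sint_sub (ξ : SignedMeasure Sph) {g f : Sph → ℝ} (hg : Continuous g)
    (hf : Continuous f) : sint ξ (fun u => g u - f u) = sint ξ g - sint ξ f := by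
  simp only [sint]
  rw [integral_sub (integrable_cont _ hg) (integrable_cont _ hf),
    integral_sub (integrable_cont _ hg) (integrable_cont _ hf)]
  ring

lemma sint_bound (ξ : SignedMeasure Sph) {g : Sph → ℝ} {C : ℝ}
    (hC : ∀ u, |g u| ≤ C) : sint ξ g ≤ C * tvNorm ξ := by
  set p1 := ξ.toJordanDecomposition.posPart with hp1
  set n1 := ξ.toJordanDecomposition.negPart with hn1
  have hC0 : 0 ≤ C := le_trans (abs_nonneg _) (hC Classical.ofNonempty)
  have b1 : ‖∫ u, g u ∂p1‖ ≤ C * (p1 Set.univ).toReal :=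
    norm_integral_le_of_norm_le_const (Filter.Eventually.of_forall fun u => by
      rw [Real.norm_eq_abs]; exact hC u)
  have b2 : ‖∫ u, g u ∂n1‖ ≤ C * (n1 Set.univ).toReal :=
    norm_integral_le_of_norm_le_const (Filter.Eventually.of_forall fun u => by
      rw [Real.norm_eq_abs]; exact hC u)
  have htv : tvNorm ξ = (p1 Set.univ).toReal + (n1 Set.univ).toReal := by
    simp only [tvNorm, MeasureTheory.SignedMeasure.totalVariation, Measure.add_apply]
    exact ENNReal.toReal_add (measure_ne_top _ _) (measure_ne_top _ _)
  rw [Real.norm_eq_abs] at b1 b2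
  simp only [sint]
  rw [htv]
  have := abs_le.1 b1
  have := abs_le.1 b2
  cases abs_le.1 b1; cases abs_le.1 b2
  nlinarith [abs_le.1 b1, abs_le.1 b2]

lemma suppFn_closedBall (c : E3) (r : ℝ) (hr : 0 ≤ r) (u : E3) :
    suppFn (Metric.closedBall c r) u = ⟪c, u⟫ + r * ‖u‖ := by
  have hub : ∀ y ∈ (fun x => ⟪x, u⟫) '' Metric.closedBall c r, y ≤ ⟪c, u⟫ + r * ‖u‖ := by
    rintro y ⟨x, hx, rfl⟩
    have h1 : ⟪x - c, u⟫ ≤ ‖x - c‖ * ‖u‖ := real_inner_le_norm _ _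
    have h3 : ‖x - c‖ ≤ r := by rwa [mem_closedBall, dist_eq_norm] at hx
    have h4 : ‖x - c‖ * ‖u‖ ≤ r * ‖u‖ := mul_le_mul_of_nonneg_right h3 (norm_nonneg u)
    have h5 : ⟪x, u⟫ = ⟪c, u⟫ + ⟪x - c, u⟫ := by rw [inner_sub_left]; ring
    linarith
  have hbdd : BddAbove ((fun x => ⟪x, u⟫) '' Metric.closedBall c r) := ⟨_, hub⟩
  apply le_antisymm
  · exact csSup_le ((nonempty_closedBall.2 hr).image _) hub
  · rcases eq_or_ne u 0 with rfl | hu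
    · have hmem : ⟪c, (0:E3)⟫ ∈ (fun x => ⟪x, (0:E3)⟫) '' Metric.closedBall c r :=
        ⟨c, mem_closedBall_self hr, rfl⟩
      have := le_csSup hbdd hmem
      simpa [suppFn] using this
    · have hu' : 0 < ‖u‖ := norm_pos_iff.2 hu
      set x := c + (r / ‖u‖) • u with hx
      have hxmem : x ∈ Metric.closedBall c r := by
        rw [mem_closedBall, dist_eq_norm, hx]
        have : c + (r / ‖u‖) • u - c = (r / ‖u‖) • u := by abel
        rw [this, norm_smul, Real.norm_eq_abs, abs_of_nonneg (by positivity)]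
        field_simp
        exact le_rfl
      have hval : ⟪x, u⟫ = ⟪c, u⟫ + r * ‖u‖ := by
        rw [hx, inner_add_left, real_inner_smul_left, real_inner_self_eq_norm_sq]
        field_simp
      have hle : ⟪x, u⟫ ≤ suppFn (Metric.closedBall c r) u := le_csSup hbdd ⟨x, hxmem, rfl⟩
      rw [hval] at hle
      exact hle

lemma ball_is_cw (c : E3) : IsBodyOfConstantWidthOne (Metric.closedBall c (1/2)) := by
  refine ⟨nonempty_closedBall.2 (by norm_num), isCompact_closedBall _ _,
    convex_closedBall _ _, fun u => ?_⟩
  rw [suppFn_closedBall c (1/2) (by norm_num), suppFn_closedBall c (1/2) (by norm_num),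
    inner_neg_right, norm_neg]
  ring

lemma linear_mem_Cw (c : E3) : (fun u : Sph => ⟪c, (u : E3)⟫) ∈ Cw := by
  refine ⟨Continuous.inner continuous_const continuous_subtype_val,
    Metric.closedBall c (1/2), ball_is_cw c, fun u => ?_⟩
  rw [suppFn_closedBall c (1/2) (by norm_num)]
  have hu1 : ‖(u : E3)‖ = 1 := by simpa using mem_sphere_zero_iff_norm.mp u.2
  rw [hu1]
  ring

lemma cw_bound {g : Sph → ℝ} (hg : g ∈ Cw) :
    ∃ c : E3, ∀ u : Sph, |g u - ⟪c, (u : E3)⟫| ≤ Real.sqrt (3/8) - 1/2 := by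
  obtain ⟨hgc, K, ⟨hKne, hKcpt, hKconv, hKw⟩, hgK⟩ := hg
  have hbdd : ∀ u : E3, BddAbove ((fun x => ⟪x, u⟫) '' K) := fun u =>
    (hKcpt.image (Continuous.inner continuous_id continuous_const)).bddAbove
  have hne' : ∀ u : E3, ((fun x => ⟪x, u⟫) '' K).Nonempty := fun u => hKne.image _
  have hdiam : ∀ p ∈ K, ∀ q ∈ K, dist p q ≤ 1 := by
    intro p hp q hq
    have key : ∀ u : E3, ⟪p - q, u⟫ ≤ ‖u‖ := by
      intro u
      have h1 : ⟪p, u⟫ ≤ suppFn K u := le_csSup (hbdd u) ⟨p, hp, rfl⟩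
      have h2 : ⟪q, -u⟫ ≤ suppFn K (-u) := le_csSup (hbdd (-u)) ⟨q, hq, rfl⟩
      have h3 := hKw u
      rw [inner_neg_right] at h2
      rw [inner_sub_left]
      linarith
    rw [dist_eq_norm]
    rcases eq_or_lt_of_le (norm_nonneg (p - q)) with h0 | h0
    · rw [← h0]; norm_num
    · have hk := key (p - q)
      rw [real_inner_self_eq_norm_sq] at hk
      nlinarith
  obtain ⟨c, hc⟩ := jung_compact K hKcpt hKne hdiam
  have hupper : ∀ u : E3, suppFn K u ≤ ⟪c, u⟫ + Real.sqrt (3/8) * ‖u‖ := by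
    intro u
    apply csSup_le (hne' u)
    rintro y ⟨x, hx, rfl⟩
    have h1 : ⟪x - c, u⟫ ≤ ‖x - c‖ * ‖u‖ := real_inner_le_norm _ _
    have h2 : ‖x - c‖ ≤ Real.sqrt (3/8) := by rw [← dist_eq_norm]; exact hc x hx
    have h3 : ‖x - c‖ * ‖u‖ ≤ Real.sqrt (3/8) * ‖u‖ :=
      mul_le_mul_of_nonneg_right h2 (norm_nonneg u)
    have h4 : ⟪x, u⟫ = ⟪c, u⟫ + ⟪x - c, u⟫ := by rw [inner_sub_left]; ring
    linarith
  refine ⟨c, fun u => ?_⟩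
  have hu1 : ‖(u : E3)‖ = 1 := by simpa using mem_sphere_zero_iff_norm.mp u.2
  have hK1 := hKw (u : E3)
  rw [hu1] at hK1
  have h5 := hupper (u : E3)
  rw [hu1, mul_one] at h5
  have h6 := hupper (-(u : E3))
  rw [norm_neg, hu1, mul_one, inner_neg_right] at h6
  have h7 := hgK u
  rw [abs_le]
  constructor <;> linarith

theorem chiStar_le_quotient_norm (ξ : SignedMeasure Sph) (hξ : ξ ∈ Pperp) :
    sSup ((fun g => sint ξ g) '' Cw) ≤
      (Real.sqrt (3 / 8) - 1 / 2) * sInf ((fun η => tvNorm (ξ + η)) '' Cperp) := by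
  have hrpos : (0:ℝ) < Real.sqrt (3/8) - 1/2 := by
    have h12 : (1/2 : ℝ) < Real.sqrt (3/8) := by
      have : ((1:ℝ)/2) ^ 2 < 3/8 := by norm_num
      nlinarith [Real.sq_sqrt (show (0:ℝ) ≤ 3/8 by norm_num), Real.sqrt_nonneg (3/8 : ℝ)]
    linarith
  have h38 : (3/8 : ℝ) = 3 / 8 := by norm_num
  have h0C : (0 : SignedMeasure Sph) ∈ Cperp := by
    intro g hg
    simp [sint, MeasureTheory.SignedMeasure.toJordanDecomposition_zero]
  have hSne : ((fun η => tvNorm (ξ + η)) '' Cperp).Nonempty :=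
    ⟨_, Set.mem_image_of_mem _ h0C⟩
  apply Real.sSup_le
  · rintro x ⟨g, hgC, rfl⟩
    have hbound : ∀ η ∈ Cperp, sint ξ g ≤ (Real.sqrt (3/8) - 1/2) * tvNorm (ξ + η) := by
      intro η hη
      obtain ⟨c, hc⟩ := cw_bound hgC
      have hgcont : Continuous g := hgC.1
      have hlcont : Continuous (fun u : Sph => ⟪c, (u : E3)⟫) :=
        Continuous.inner continuous_const continuous_subtype_val
      have e1 : sint (ξ + η) g = sint ξ g := by
        rw [sint_add_measure ξ η hgcont, hη g hgC, add_zero]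
      have e2 : sint (ξ + η) (fun u : Sph => ⟪c, (u : E3)⟫) = 0 := by
        rw [sint_add_measure ξ η hlcont, hξ c, hη _ (linear_mem_Cw c), add_zero]
      have e3 : sint (ξ + η) (fun u => g u - ⟪c, (u : E3)⟫) = sint ξ g := by
        rw [sint_sub (ξ + η) hgcont hlcont, e1, e2, sub_zero]
      calc sint ξ g = sint (ξ + η) (fun u => g u - ⟪c, (u : E3)⟫) := e3.symm
        _ ≤ (Real.sqrt (3/8) - 1/2) * tvNorm (ξ + η) := sint_bound _ hc
    have h2 : sint ξ g / (Real.sqrt (3/8) - 1/2) ≤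
        sInf ((fun η => tvNorm (ξ + η)) '' Cperp) := by
      apply le_csInf hSne
      rintro b ⟨η, hη, rfl⟩
      rw [div_le_iff₀ hrpos, mul_comm]
      exact hbound η hη
    have h3 := (div_le_iff₀ hrpos).mp h2
    calc sint ξ g ≤ sInf ((fun η => tvNorm (ξ + η)) '' Cperp) * (Real.sqrt (3/8) - 1/2) := h3
      _ = (Real.sqrt (3/8) - 1/2) * sInf ((fun η => tvNorm (ξ + η)) '' Cperp) := mul_comm _ _
  · apply mul_nonneg hrpos.le
    apply Real.sInf_nonneg
    rintro b ⟨η, _, rfl⟩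
    exact ENNReal.toReal_nonneg
end
end

section
/- Let f : [0, ∞) → ℝ be locally integrable and suppose that for almost every pair (s, t) with 0 ≤ s ≤ t < ∞ (with respect to two-dimensional Lebesgue measure on {(s,t) : 0 ≤ s ≤ t}), one has ∫_s^t f(τ) dτ ≤ (t − s)·f(s). Then f is essentially nonincreasing: there exists a Lebesgue-null set N ⊆ [0, ∞) such that f(t) ≤ f(s) for all s ≤ t with s, t ∉ N. -/
open MeasureTheory Filter intervalIntegral Set Metric Topology

private lemma aux_mem_closure_inter_Ioi {G : Set ℝ} (hG : volume Gᶜ = 0) (t : ℝ) :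
    t ∈ closure (G ∩ Set.Ioi t) := by
  rw [_root_.mem_closure_iff]
  intro U hU htU
  rcases Metric.isOpen_iff.1 hU t htU with ⟨ε, hε, hb⟩
  by_contra hne
  rw [Set.not_nonempty_iff_eq_empty] at hne
  have hsub : Set.Ioo t (t + ε) ⊆ Gᶜ := by
    intro x hx hxG
    have hxU : x ∈ U := hb (by rw [Real.ball_eq_Ioo]; exact ⟨by linarith [hx.1], hx.2⟩)
    have : x ∈ U ∩ (G ∩ Set.Ioi t) := ⟨hxU, hxG, hx.1⟩
    rw [hne] at this
    exact this
  have h1 := measure_mono (μ := volume) hsub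
  rw [hG, Real.volume_Ioo] at h1
  simp only [nonpos_iff_eq_zero, ENNReal.ofReal_eq_zero] at h1
  linarith


private lemma key_avg (g : ℝ → ℝ) (hgint : ∀ a b : ℝ, IntervalIntegrable g volume a b)
    (s a b : ℝ) (hsa : s ≤ a) (hab : a < b)
    (hsGood : ∀ t, s ≤ t → (∫ τ in s..t, g τ) ≤ (t - s) * g s)
    (hae : ∀ᵐ x : ℝ, s < x → x < b → (∫ τ in x..b, g τ) ≤ (b - x) * g x) :
    (∫ τ in a..b, g τ) ≤ (b - a) * g s := by
  have hsb : s < b := lt_of_le_of_lt hsa hab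
  set q : ℝ → ℝ := fun x => (∫ τ in x..b, g τ) / (b - x) with hq_def
  have hGq : ∀ x : ℝ, x < b → (b - x) * q x = ∫ τ in x..b, g τ := by
    intro x hx
    have hne : b - x ≠ 0 := sub_ne_zero.mpr (ne_of_gt hx)
    simp only [hq_def]
    field_simp
  have hGb : (fun x : ℝ => ∫ τ in x..b, g τ)
      = fun x => (∫ τ in (0:ℝ)..b, g τ) - ∫ τ in (0:ℝ)..x, g τ := by
    funext x
    rw [eq_sub_iff_add_eq, add_comm,
      intervalIntegral.integral_add_adjacent_intervals (hgint 0 x) (hgint x b)]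
  have hGcont : Continuous fun x : ℝ => ∫ τ in x..b, g τ := by
    rw [hGb]
    exact continuous_const.sub (intervalIntegral.continuous_primitive hgint 0)
  have hqc : ContinuousOn q (Set.Icc s a) := by
    apply hGcont.continuousOn.div (continuous_const.sub continuous_id).continuousOn
    intro x hx
    have : x < b := lt_of_le_of_lt hx.2 hab
    simp only [Pi.sub_apply, id]
    intro hbx
    nlinarith [sub_eq_zero.mp hbx]
  have hqs : q s ≤ g s := by
    rw [hq_def]
    rw [div_le_iff₀ (by linarith)]
    have := hsGood b (le_of_lt hsb)
    linarith [this]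
  -- the key two-point integral inequality
  have star : ∀ x1 x2 : ℝ, s ≤ x1 → x1 ≤ x2 → x2 ≤ a →
      (b - x2) * q x2 ≤ (b - x1) * q x1 - ∫ τ in x1..x2, q τ := by
    intro x1 x2 hs1 h12 h2a
    have hx1b : x1 < b := lt_of_le_of_lt (le_trans h12 h2a) hab
    have hx2b : x2 < b := lt_of_le_of_lt h2a hab
    have hadj : (∫ τ in x1..x2, g τ) + ∫ τ in x2..b, g τ = ∫ τ in x1..b, g τ :=
      intervalIntegral.integral_add_adjacent_intervals (hgint x1 x2) (hgint x2 b)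
    have hqint : IntervalIntegrable q volume x1 x2 := by
      apply ContinuousOn.intervalIntegrable
      apply hqc.mono
      rw [uIcc_of_le h12]
      exact Set.Icc_subset_Icc hs1 (le_trans h2a (le_refl a))
    have hmono : (∫ τ in x1..x2, q τ) ≤ ∫ τ in x1..x2, g τ := by
      apply intervalIntegral.integral_mono_ae_restrict h12 hqint (hgint x1 x2)
      have hne : ∀ᵐ x : ℝ, x ≠ s := by
        rw [ae_iff]
        have : {x : ℝ | ¬x ≠ s} = {s} := by ext x; simp
        rw [this]
        exact Real.volume_singleton
      filter_upwards [ae_restrict_mem measurableSet_Icc, ae_restrict_of_ae hae,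
        ae_restrict_of_ae hne] with x hx hxq hxs
      have hsx : s < x := lt_of_le_of_ne (le_trans hs1 hx.1) (Ne.symm hxs)
      have hxb : x < b := lt_of_le_of_lt (le_trans hx.2 h2a) hab
      rw [hq_def]
      rw [div_le_iff₀ (by linarith)]
      have := hxq hsx hxb
      linarith
    rw [hGq x1 hx1b, hGq x2 hx2b]
    linarith
  -- maximum principle: q a ≤ g s
  have hqa : q a ≤ g s := by
    obtain ⟨xM, hxM, hmax⟩ := isCompact_Icc.exists_isMaxOn (Set.nonempty_Icc.2 hsa) hqc
    have hmax' : ∀ x ∈ Set.Icc s a, q x ≤ q xM := hmax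
    by_cases hM : q xM ≤ g s
    · exact le_trans (hmax' a (Set.right_mem_Icc.2 hsa)) hM
    · exfalso
      push_neg at hM
      set M := q xM with hM_def
      set c : ℝ := (g s + M) / 2 with hc_def
      have hc1 : g s < c := by rw [hc_def]; linarith
      have hc2 : c < M := by rw [hc_def]; linarith
      set E : Set ℝ := {x ∈ Set.Icc s xM | q x ≤ c} with hE_def
      have hEclosed : IsClosed E := by
        have : ContinuousOn q (Set.Icc s xM) := hqc.mono (Set.Icc_subset_Icc_right hxM.2)
        exact ContinuousOn.preimage_isClosed_of_isClosed this isClosed_Icc isClosed_Iic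
      have hsE : s ∈ E := ⟨Set.left_mem_Icc.2 hxM.1, le_trans hqs (le_of_lt hc1)⟩
      have hEne : E.Nonempty := ⟨s, hsE⟩
      have hEbdd : BddAbove E := ⟨xM, fun x hx => hx.1.2⟩
      set x1 := sSup E with hx1_def
      have hx1E : x1 ∈ E := hEclosed.csSup_mem hEne hEbdd
      have hx1M : x1 ≤ xM := hx1E.1.2
      have hx1s : s ≤ x1 := hx1E.1.1
      have hx1lt : x1 < xM := by
        rcases lt_or_eq_of_le hx1M with h | h
        · exact h
        · exfalso; rw [h] at hx1E; linarith [hx1E.2]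
      have hqlow : ∀ τ ∈ Set.Ioc x1 xM, c ≤ q τ := by
        intro τ hτ
        by_contra hlt
        push_neg at hlt
        have : τ ∈ E := ⟨⟨le_trans hx1s (le_of_lt hτ.1), hτ.2⟩, le_of_lt hlt⟩
        have := le_csSup hEbdd this
        linarith [hτ.1]
      have hqint2 : IntervalIntegrable q volume x1 xM := by
        apply ContinuousOn.intervalIntegrable
        apply hqc.mono
        rw [uIcc_of_le (le_of_lt hx1lt)]
        exact Set.Icc_subset_Icc hx1s hxM.2
      have hlow : c * (xM - x1) ≤ ∫ τ in x1..xM, q τ := by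
        rw [intervalIntegral.integral_of_le (le_of_lt hx1lt)]
        have h1 : ∫ τ in Set.Ioc x1 xM, (fun _ : ℝ => c) τ ≤ ∫ τ in Set.Ioc x1 xM, q τ := by
          apply setIntegral_mono_on
          · exact integrableOn_const measure_Ioc_lt_top.ne
          · exact hqint2.1
          · exact measurableSet_Ioc
          · exact hqlow
        have h2 : ∫ τ in Set.Ioc x1 xM, (fun _ : ℝ => c) τ = (xM - x1) * c := by
          rw [setIntegral_const, Real.volume_real_Ioc_of_le (by linarith), smul_eq_mul]
        linarith
      have hstar := star x1 xM hx1s (le_of_lt hx1lt) hxM.2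
      have hbxM : (0:ℝ) < b - xM := by linarith [lt_of_le_of_lt hxM.2 hab]
      have hbx1 : (0:ℝ) < b - x1 := by linarith [lt_of_le_of_lt (le_trans hx1M hxM.2) hab]
      have hq1 : (b - x1) * q x1 ≤ (b - x1) * c :=
        mul_le_mul_of_nonneg_left hx1E.2 (le_of_lt hbx1)
      have : (b - xM) * M ≤ c * (b - xM) := by nlinarith
      nlinarith
  have hba : (0:ℝ) ≤ b - a := by linarith
  calc (∫ τ in a..b, g τ) = (b - a) * q a := (hGq a hab).symm
    _ ≤ (b - a) * g s := mul_le_mul_of_nonneg_left hqa hba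

/-- If `f` is locally integrable on `[0,∞)` and `∫_s^t f ≤ (t - s) * f s` for almost every
pair `(s, t)` with `0 ≤ s ≤ t`, then `f` is essentially nonincreasing. -/
theorem essentially_nonincreasing_of_integral_condition (f : ℝ → ℝ)
    (hloc : LocallyIntegrableOn f (Set.Ici 0) volume)
    (h : ∀ᵐ p : ℝ × ℝ, (0 ≤ p.1 ∧ p.1 ≤ p.2) →
      (∫ τ in p.1..p.2, f τ) ≤ (p.2 - p.1) * f p.1) :
    ∃ N : Set ℝ, volume N = 0 ∧
      ∀ s t : ℝ, 0 ≤ s → s ≤ t → s ∉ N → t ∉ N → f t ≤ f s := by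
  classical
  set g : ℝ → ℝ := (Set.Ici (0:ℝ)).indicator f with hg_def
  have hgf : ∀ x : ℝ, 0 ≤ x → g x = f x := fun x hx => Set.indicator_of_mem hx f
  -- g is locally integrable on ℝ
  have hg : LocallyIntegrable g volume := by
    rw [MeasureTheory.locallyIntegrable_iff]
    intro K hK
    have h1 : IntegrableOn f (Set.Ici 0 ∩ K) volume :=
      hloc.integrableOn_compact_subset Set.inter_subset_left (hK.inter_left isClosed_Ici)
    rw [hg_def, IntegrableOn, integrable_indicator_iff measurableSet_Ici]
    rwa [IntegrableOn, Measure.restrict_restrict measurableSet_Ici] at *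
  have hgint : ∀ a b : ℝ, IntervalIntegrable g volume a b := fun a b =>
    ⟨(hg.integrableOn_isCompact isCompact_Icc).mono_set Set.Ioc_subset_Icc_self,
     (hg.integrableOn_isCompact isCompact_Icc).mono_set Set.Ioc_subset_Icc_self⟩
  -- interval integrals of f and g agree on [0,∞)
  have hfg_int : ∀ s t : ℝ, 0 ≤ s → s ≤ t → (∫ τ in s..t, f τ) = ∫ τ in s..t, g τ := by
    intro s t hs hst
    apply intervalIntegral.integral_congr
    intro x hx
    rw [Set.uIcc_of_le hst] at hx
    exact (hgf x (le_trans hs hx.1)).symm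
  -- Fubini + continuity: a.e. s is "good"
  have hGood : ∀ᵐ s : ℝ, 0 ≤ s → ∀ t, s ≤ t → (∫ τ in s..t, g τ) ≤ (t - s) * g s := by
    rw [Measure.volume_eq_prod] at h
    have h2 := Measure.ae_ae_of_ae_prod h
    filter_upwards [h2] with s hs hs0 t hst
    set G : Set ℝ := {t' : ℝ | (0 ≤ s ∧ s ≤ t') → (∫ τ in s..t', f τ) ≤ (t' - s) * f s} with hG_def
    have hGnull : volume Gᶜ = 0 := by
      rw [hG_def, Set.compl_setOf]
      exact ae_iff.mp hs
    have hclosed : IsClosed {t' : ℝ | (∫ τ in s..t', g τ) ≤ (t' - s) * g s} := by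
      apply isClosed_le
      · have : (fun t' : ℝ => ∫ τ in s..t', g τ) = fun t' => ∫ τ in s..t', g τ := rfl
        exact (intervalIntegral.continuous_primitive hgint s)
      · exact (continuous_sub_right s).mul continuous_const
    have hsubset : G ∩ Set.Ioi t ⊆ {t' : ℝ | (∫ τ in s..t', g τ) ≤ (t' - s) * g s} := by
      intro t' ht'
      have hst' : s ≤ t' := le_trans hst (le_of_lt ht'.2)
      have := ht'.1 ⟨hs0, hst'⟩
      rw [hfg_int s t' hs0 hst', ← hgf s hs0] at this
      exact this
    have := aux_mem_closure_inter_Ioi hGnull t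
    have htmem := closure_mono hsubset this
    rwa [hclosed.closure_eq] at htmem
  -- Lebesgue differentiation
  have hleb : ∀ᵐ t : ℝ, Tendsto (fun r => ⨍ y in closedBall t r, g y) (𝓝[>] (0:ℝ)) (𝓝 (g t)) := by
    filter_upwards [IsUnifLocDoublingMeasure.ae_tendsto_average volume hg 1] with t ht
    refine ht (fun _ => t) id tendsto_id ?_
    filter_upwards [self_mem_nhdsWithin] with r hr
    exact Metric.mem_closedBall_self (by rw [one_mul]; exact le_of_lt hr)
  -- assemble
  set P : ℝ → Prop := fun x =>
    (0 ≤ x → ∀ t, x ≤ t → (∫ τ in x..t, g τ) ≤ (t - x) * g x) ∧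
    Tendsto (fun r => ⨍ y in closedBall x r, g y) (𝓝[>] (0:ℝ)) (𝓝 (g x)) with hP_def
  have hPae : ∀ᵐ x : ℝ, P x := hGood.and hleb
  refine ⟨{x | ¬ P x}, ae_iff.mp hPae, ?_⟩
  intro s t hs0 hst hsN htN
  simp only [Set.mem_setOf_eq, not_not] at hsN htN
  rcases eq_or_lt_of_le hst with rfl | hlt
  · exact le_refl _
  -- s < t
  have hsGood := hsN.1 hs0
  have htleb := htN.2
  have hkey : ∀ᶠ r in 𝓝[>] (0:ℝ), (⨍ y in closedBall t r, g y) ≤ g s := by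
    have hmem : Set.Ioo (0:ℝ) (t - s) ∈ 𝓝[>] (0:ℝ) :=
      Ioo_mem_nhdsGT_of_mem ⟨le_refl _, by linarith⟩
    filter_upwards [hmem] with r hr
    have hr0 : 0 < r := hr.1
    have hrts : r < t - s := hr.2
    have havg : (⨍ y in closedBall t r, g y)
        = (2 * r)⁻¹ * ∫ τ in (t - r)..(t + r), g τ := by
      rw [setAverage_eq, Real.closedBall_eq_Icc, Real.volume_real_Icc_of_le (by linarith),
        integral_Icc_eq_integral_Ioc, ← intervalIntegral.integral_of_le (by linarith)]
      rw [smul_eq_mul]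
      ring_nf
    have hineq : (∫ τ in (t - r)..(t + r), g τ) ≤ (2 * r) * g s := by
      have hae2 : ∀ᵐ x : ℝ, s < x → x < t + r → (∫ τ in x..(t + r), g τ) ≤ (t + r - x) * g x := by
        filter_upwards [hGood] with x hx hsx hxb
        exact hx (le_trans hs0 (le_of_lt hsx)) (t + r) (le_of_lt hxb)
      have := key_avg g hgint s (t - r) (t + r) (by linarith) (by linarith) hsGood hae2
      calc (∫ τ in (t - r)..(t + r), g τ) ≤ ((t + r) - (t - r)) * g s := this
        _ = (2 * r) * g s := by ring_nf
    rw [havg]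
    rw [inv_mul_le_iff₀ (by positivity)]
    calc (∫ τ in (t - r)..(t + r), g τ) ≤ (2 * r) * g s := hineq
      _ = 2 * r * g s := by ring
  have hgle : g t ≤ g s := le_of_tendsto htleb hkey
  rw [← hgf s hs0, ← hgf t (le_trans hs0 hst)]
  exact hgle
end
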